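/- Let n ≥ 1 and let φ : ℝⁿ → ℂ be a Schwartz function. Then the following are equivalent: (i) n‖φ‖² = ‖xφ‖² + ‖∇φ‖²; (ii) xφ = −∇φ, i.e., xⱼφ(x) = −∂ⱼφ(x) for all x ∈ ℝⁿ and 1 ≤ j ≤ n; (iii) there exists θ ∈ ℝ such that φ(x) = e^{iθ} π^{−n/4} ‖φ‖ exp(−|x|²/2) for all x ∈ ℝⁿ. -/

import Mathlib

open MeasureTheory Complex

variable {n : ℕ}
local notation "E" => EuclideanSpace ℝ (Fin n)

lemma gauss_hasFDerivAt (c a : ℂ) (x : EuclideanSpace ℝ (Fin n)) :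
    HasFDerivAt (fun y : E ↦ c * Complex.exp (a * ((‖y‖ ^ 2 : ℝ) : ℂ)))
      ((c * Complex.exp (a * ((‖x‖ ^ 2 : ℝ) : ℂ)) * (2 * a)) •
        (Complex.ofRealCLM.comp (innerSL ℝ x))) x := by
  have h1 : HasFDerivAt (fun y : E ↦ ‖y‖ ^ 2) (2 • (innerSL ℝ x)) x :=
    (hasFDerivAt_id x).norm_sq
  have h2 : HasFDerivAt (fun y : E ↦ ((‖y‖ ^ 2 : ℝ) : ℂ))
      ((2:ℝ) • (Complex.ofRealCLM.comp (innerSL ℝ x))) x := by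
    have := (Complex.ofRealCLM.hasFDerivAt (x := ((‖x‖^2 : ℝ)))).comp x h1
    refine this.congr_fderiv ?_
    ext v; simp [nsmul_eq_mul]
  have h3 : HasFDerivAt (fun y : E ↦ a * ((‖y‖ ^ 2 : ℝ) : ℂ))
      (a • ((2:ℝ) • (Complex.ofRealCLM.comp (innerSL ℝ x)))) x := h2.const_mul a
  have h4 := h3.cexp
  have h5 := h4.const_mul c
  refine h5.congr_fderiv ?_
  ext v
  simp [ContinuousLinearMap.smul_apply, smul_eq_mul]
  ring

lemma gauss_pderiv (c : ℂ) (x : EuclideanSpace ℝ (Fin n)) (j : Fin n) :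
    fderiv ℝ (fun y : E ↦ c * Complex.exp ((-1/2 : ℂ) * ((‖y‖ ^ 2 : ℝ) : ℂ))) x
      (EuclideanSpace.single j 1)
    = -((x j : ℂ) * (c * Complex.exp ((-1/2 : ℂ) * ((‖x‖ ^ 2 : ℝ) : ℂ)))) := by
  rw [(gauss_hasFDerivAt c (-1/2) x).fderiv]
  have : ((innerSL ℝ) x) (EuclideanSpace.single j 1) = x j := by
    simp [EuclideanSpace.inner_single_right]
  simp only [ContinuousLinearMap.smul_apply, ContinuousLinearMap.comp_apply, this,
    Complex.ofRealCLM_apply, smul_eq_mul]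
  ring

lemma three_two (φ : SchwartzMap (EuclideanSpace ℝ (Fin n)) ℂ) (C : ℂ)
    (h : ∀ x : E, φ x = C * Complex.exp (-((‖x‖ : ℂ) ^ 2) / 2)) :
    ∀ (x : E) (j : Fin n),
      (x j : ℂ) * φ x = -(fderiv ℝ (⇑φ) x (EuclideanSpace.single j 1)) := by
  have hfun : ⇑φ = fun y : E ↦ C * Complex.exp ((-1/2 : ℂ) * ((‖y‖ ^ 2 : ℝ) : ℂ)) := by
    funext y
    rw [h y]
    push_cast
    ring_nf
  intro x j
  rw [hfun, gauss_pderiv, ← hfun, h x]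
  push_cast
  ring_nf

lemma two_const (φ : SchwartzMap (EuclideanSpace ℝ (Fin n)) ℂ)
    (h2 : ∀ (x : E) (j : Fin n),
      (x j : ℂ) * φ x = -(fderiv ℝ (⇑φ) x (EuclideanSpace.single j 1))) :
    ∀ x : E, φ x = φ 0 * Complex.exp ((-1/2 : ℂ) * ((‖x‖ ^ 2 : ℝ) : ℂ)) := by
  set G : E → ℂ := fun y : E ↦ (1 : ℂ) * Complex.exp ((1/2 : ℂ) * ((‖y‖ ^ 2 : ℝ) : ℂ)) with hG
  have hGd : ∀ x : E, HasFDerivAt G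
      (((1 : ℂ) * Complex.exp ((1/2 : ℂ) * ((‖x‖ ^ 2 : ℝ) : ℂ)) * (2 * (1/2 : ℂ))) •
        (Complex.ofRealCLM.comp (innerSL ℝ x))) x := fun x ↦ gauss_hasFDerivAt 1 (1/2) x
  have hψd : ∀ x : E, HasFDerivAt (fun y : E ↦ G y * φ y)
      (G x • (fderiv ℝ (⇑φ) x) +
        (((1 : ℂ) * Complex.exp ((1/2 : ℂ) * ((‖x‖ ^ 2 : ℝ) : ℂ)) * (2 * (1/2 : ℂ))) •
          (Complex.ofRealCLM.comp (innerSL ℝ x))).smulRight (φ x)) x :=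
    fun x ↦ (hGd x).mul' (φ.differentiableAt.hasFDerivAt)
  have hzero : ∀ x : E, fderiv ℝ (fun y : E ↦ G y * φ y) x = 0 := by
    intro x
    rw [(hψd x).fderiv]
    apply ContinuousLinearMap.coe_injective
    apply Module.Basis.ext (EuclideanSpace.basisFun (Fin n) ℝ).toBasis
    intro j
    have hb : ((EuclideanSpace.basisFun (Fin n) ℝ).toBasis : Module.Basis (Fin n) ℝ E) j
        = EuclideanSpace.single j 1 := by
      simp [EuclideanSpace.basisFun_apply]
    rw [hb]
    have hinner : ((innerSL ℝ) x) (EuclideanSpace.single j 1) = x j := by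
      simp [EuclideanSpace.inner_single_right]
    have := h2 x j
    simp only [ContinuousLinearMap.coe_coe, ContinuousLinearMap.add_apply,
      ContinuousLinearMap.coe_smul', Pi.smul_apply, ContinuousLinearMap.smulRight_apply,
      ContinuousLinearMap.smul_apply, ContinuousLinearMap.comp_apply, hinner,
      Complex.ofRealCLM_apply, smul_eq_mul, ContinuousLinearMap.zero_apply]
    have hd : fderiv ℝ (⇑φ) x (EuclideanSpace.single j 1) = -((x j : ℂ) * φ x) := by
      rw [this]; ring
    rw [hd]
    ring
  have hconst : ∀ x : E, G x * φ x = G 0 * φ 0 := by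
    intro x
    exact is_const_of_fderiv_eq_zero (fun y ↦ (hψd y).differentiableAt) hzero x 0
  intro x
  have h0 : G 0 = 1 := by simp [hG]
  have hGx : G x * Complex.exp ((-1/2 : ℂ) * ((‖x‖ ^ 2 : ℝ) : ℂ)) = 1 := by
    show (1:ℂ) * Complex.exp _ * Complex.exp _ = 1
    rw [one_mul, ← Complex.exp_add]
    ring_nf
    exact Complex.exp_zero
  have hcx := hconst x
  rw [h0, one_mul] at hcx
  calc φ x = φ x * (G x * Complex.exp ((-1/2 : ℂ) * ((‖x‖ ^ 2 : ℝ) : ℂ))) := by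
        rw [hGx, mul_one]
    _ = (G x * φ x) * Complex.exp ((-1/2 : ℂ) * ((‖x‖ ^ 2 : ℝ) : ℂ)) := by ring
    _ = φ 0 * Complex.exp ((-1/2 : ℂ) * ((‖x‖ ^ 2 : ℝ) : ℂ)) := by rw [hcx]

open Real in
lemma two_three (φ : SchwartzMap (EuclideanSpace ℝ (Fin n)) ℂ)
    (nφ : ℝ) (hnφ : nφ = Real.sqrt (∫ x, ‖φ x‖ ^ 2))
    (h2 : ∀ (x : E) (j : Fin n),
      (x j : ℂ) * φ x = -(fderiv ℝ (⇑φ) x (EuclideanSpace.single j 1))) :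
    ∃ θ : ℝ, ∀ x : E,
      φ x = Complex.exp (θ * Complex.I) *
        ((Real.pi ^ (-(n : ℝ) / 4) : ℝ) : ℂ) * (nφ : ℂ) *
        Complex.exp (-((‖x‖ : ℂ) ^ 2) / 2) := by
  have hφ := two_const φ h2
  have hnorm : ∀ x : E, ‖φ x‖ ^ 2 = ‖φ 0‖ ^ 2 * Real.exp (-(1:ℝ) * ‖x‖ ^ 2) := by
    intro x
    rw [hφ x, norm_mul, mul_pow]
    congr 1
    rw [Complex.norm_exp]
    have : ((-1/2 : ℂ) * ((‖x‖ ^ 2 : ℝ) : ℂ)).re = -1/2 * ‖x‖ ^ 2 := by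
      rw [show ((-1/2 : ℂ)) = ((-1/2 : ℝ) : ℂ) by norm_num, ← Complex.ofReal_mul,
        Complex.ofReal_re]
    rw [this, ← Real.exp_nat_mul]
    congr 1
    ring
  have hint : (∫ x : E, ‖φ x‖ ^ 2) = ‖φ 0‖ ^ 2 * Real.pi ^ ((n : ℝ) / 2) := by
    rw [MeasureTheory.integral_congr_ae (MeasureTheory.ae_of_all _ hnorm)]
    rw [MeasureTheory.integral_const_mul,
      GaussianFourier.integral_rexp_neg_mul_sq_norm one_pos]
    simp only [finrank_euclideanSpace_fin, div_one]
  have hnφ' : nφ = ‖φ 0‖ * Real.pi ^ ((n : ℝ) / 4) := by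
    rw [hnφ, hint, Real.sqrt_mul (sq_nonneg _), Real.sqrt_sq (norm_nonneg _)]
    congr 1
    rw [Real.sqrt_eq_rpow, ← Real.rpow_mul Real.pi_pos.le]
    congr 1
    ring
  refine ⟨Complex.arg (φ 0), fun x ↦ ?_⟩
  have hre : Real.pi ^ (-(n:ℝ)/4) * (‖φ 0‖ * Real.pi ^ ((n:ℝ)/4)) = ‖φ 0‖ := by
    rw [mul_comm (‖φ 0‖) _, ← mul_assoc, ← Real.rpow_add Real.pi_pos]
    have h0 : -(n:ℝ)/4 + (n:ℝ)/4 = 0 := by ring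
    rw [h0, Real.rpow_zero, one_mul]
  have hkey : Complex.exp ((Complex.arg (φ 0) : ℂ) * Complex.I) *
      ((Real.pi ^ (-(n : ℝ) / 4) : ℝ) : ℂ) * (nφ : ℂ) = φ 0 := by
    rw [hnφ', mul_assoc, ← Complex.ofReal_mul, hre, mul_comm]
    simpa using Complex.norm_mul_exp_arg_mul_I (φ 0)
  have hexp : Complex.exp ((-1/2 : ℂ) * ((‖x‖ ^ 2 : ℝ) : ℂ))
      = Complex.exp (-((‖x‖ : ℂ) ^ 2) / 2) := by
    congr 1
    push_cast
    ring
  rw [hφ x]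
  conv_rhs => rw [hkey]
  rw [hexp]

noncomputable section

open SchwartzMap MeasureTheory

def SchwartzMap.pderivCLM (𝕜 : Type*) [RCLike 𝕜] {V W : Type*} [NormedAddCommGroup V]
    [NormedSpace ℝ V] [NormedAddCommGroup W] [NormedSpace ℝ W] [NormedSpace 𝕜 W]
    [SMulCommClass ℝ 𝕜 W] (m : V) : 𝓢(V, W) →L[𝕜] 𝓢(V, W) :=
  SchwartzMap.evalCLM 𝕜 V W m ∘L fderivCLM 𝕜 V W

lemma SchwartzMap.pderivCLM_apply (𝕜 : Type*) [RCLike 𝕜] {V W : Type*} [NormedAddCommGroup V]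
    [NormedSpace ℝ V] [NormedAddCommGroup W] [NormedSpace ℝ W] [NormedSpace 𝕜 W]
    [SMulCommClass ℝ 𝕜 W] (m : V) (f : 𝓢(V, W)) (x : V) :
    SchwartzMap.pderivCLM 𝕜 m f x = fderiv ℝ f x m := rfl

variable (n)
def coordC (j : Fin n) : EuclideanSpace ℝ (Fin n) →L[ℝ] ℂ :=
  Complex.ofRealCLM.comp (EuclideanSpace.proj j)
variable {n}

lemma coordC_apply (j : Fin n) (x : E) : coordC n j x = (x j : ℂ) := rfl

def mulCoord (j : Fin n) (ψ : SchwartzMap (EuclideanSpace ℝ (Fin n)) ℂ) :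
    SchwartzMap (EuclideanSpace ℝ (Fin n)) ℂ :=
  SchwartzMap.bilinLeftCLM (ContinuousLinearMap.mul ℝ ℂ)
    (coordC n j).hasTemperateGrowth ψ

lemma mulCoord_apply (j : Fin n) (ψ : SchwartzMap (EuclideanSpace ℝ (Fin n)) ℂ) (x : E) :
    mulCoord j ψ x = ψ x * (x j : ℂ) := rfl

lemma schwartz_bdd (ψ : SchwartzMap (EuclideanSpace ℝ (Fin n)) ℂ) :
    ∃ C, ∀ x : E, ‖ψ x‖ ≤ C :=
  ⟨SchwartzMap.seminorm ℝ 0 0 ψ, fun x ↦ ψ.norm_le_seminorm ℝ x⟩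

lemma int_conj_mul (ψ χ : SchwartzMap (EuclideanSpace ℝ (Fin n)) ℂ) :
    Integrable (fun x : E ↦ (starRingEnd ℂ) (ψ x) * χ x) := by
  obtain ⟨C, hC⟩ := schwartz_bdd ψ
  exact χ.integrable.bdd_mul
    ((Complex.continuous_conj.comp ψ.continuous).aestronglyMeasurable)
    (ae_of_all _ fun x ↦ by simpa using hC x)

lemma int_normsq (ψ : SchwartzMap (EuclideanSpace ℝ (Fin n)) ℂ) :
    Integrable (fun x : E ↦ ‖ψ x‖ ^ 2) := by
  have h := (int_conj_mul ψ ψ).re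
  have : (fun x : E ↦ RCLike.re ((starRingEnd ℂ) (ψ x) * ψ x)) = fun x : E ↦ ‖ψ x‖ ^ 2 := by
    funext x
    have : (starRingEnd ℂ) (ψ x) * ψ x = (‖ψ x‖ ^ 2 : ℝ) := by
      rw [mul_comm, Complex.mul_conj, Complex.normSq_eq_norm_sq]
    rw [this]
    exact Complex.ofReal_re _
  rwa [this] at h

def conjL : ℂ →L[ℝ] ℂ := (RCLike.conjCLE (K := ℂ)).toContinuousLinearMap

lemma conjL_eq (z : ℂ) : conjL z = (starRingEnd ℂ) z := rfl

lemma cross (φ : SchwartzMap (EuclideanSpace ℝ (Fin n)) ℂ) (j : Fin n) :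
    2 * (∫ x : E, (starRingEnd ℂ) (mulCoord j φ x) *
        (pderivCLM ℝ (EuclideanSpace.single j 1) φ) x).re
      = -∫ x : E, ‖φ x‖ ^ 2 := by
  set v : E := EuclideanSpace.single j 1 with hv
  set Dφ := pderivCLM ℝ v φ with hDφ
  set Xφ := mulCoord j φ with hXφ
  set XD := mulCoord j Dφ with hXD
  have hf : ∀ x : E, HasFDerivAt (fun y : E ↦ (starRingEnd ℂ) (Xφ y))
      (conjL.comp (φ x • coordC n j + (fderiv ℝ (⇑φ) x).smulRight ((x j : ℂ)))) x := by
    intro x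
    exact conjL.hasFDerivAt.comp x
      ((φ.differentiableAt.hasFDerivAt).mul' ((coordC n j).hasFDerivAt))
  have hfv : ∀ x : E,
      (conjL.comp (φ x • coordC n j + (fderiv ℝ (⇑φ) x).smulRight ((x j : ℂ)))) v
        = (starRingEnd ℂ) (φ x + XD x) := by
    intro x
    have h1 : (coordC n j) v = 1 := by simp [coordC, hv]
    simp only [ContinuousLinearMap.comp_apply, ContinuousLinearMap.add_apply,
      ContinuousLinearMap.coe_smul', Pi.smul_apply, ContinuousLinearMap.smulRight_apply,
      h1, smul_eq_mul, mul_one, conjL_eq]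
    congr 1
  have hint1 : Integrable (fun x : E ↦
      (ContinuousLinearMap.mul ℝ ℂ)
        ((conjL.comp (φ x • coordC n j + (fderiv ℝ (⇑φ) x).smulRight ((x j : ℂ)))) v)
        (φ x)) := by
    have := int_conj_mul (φ + XD) φ
    apply this.congr
    filter_upwards with x
    rw [hfv x]
    show (starRingEnd ℂ) ((φ + XD) x) * φ x = (starRingEnd ℂ) (φ x + XD x) * φ x
    rw [SchwartzMap.add_apply]
  have hint2 : Integrable (fun x : E ↦
      (ContinuousLinearMap.mul ℝ ℂ) ((starRingEnd ℂ) (Xφ x)) (fderiv ℝ (⇑φ) x v)) := by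
    have := int_conj_mul Xφ Dφ
    apply this.congr
    filter_upwards with x
    show (starRingEnd ℂ) (Xφ x) * Dφ x = (starRingEnd ℂ) (Xφ x) * fderiv ℝ (⇑φ) x v
    rw [hDφ, pderivCLM_apply]
  have hint3 : Integrable (fun x : E ↦
      (ContinuousLinearMap.mul ℝ ℂ) ((starRingEnd ℂ) (Xφ x)) (φ x)) :=
    int_conj_mul Xφ φ
  have hIBP := integral_bilinear_hasFDerivAt_right_eq_neg_left_of_integrable
    (μ := volume) hint1 hint2 hint3 (fun x _ ↦ hf x) (fun x _ ↦ φ.differentiableAt.hasFDerivAt)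
  -- rewrite both sides
  have hL : (∫ x : E, (ContinuousLinearMap.mul ℝ ℂ) ((starRingEnd ℂ) (Xφ x))
      (fderiv ℝ (⇑φ) x v)) = ∫ x : E, (starRingEnd ℂ) (Xφ x) * Dφ x := by
    congr 1
  have hR : (∫ x : E, (ContinuousLinearMap.mul ℝ ℂ)
      ((conjL.comp (φ x • coordC n j + (fderiv ℝ (⇑φ) x).smulRight ((x j : ℂ)))) v) (φ x))
      = ((∫ x : E, ‖φ x‖ ^ 2 : ℝ) : ℂ) + ∫ x : E, (starRingEnd ℂ) (XD x) * φ x := by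
    have heq : (fun x : E ↦ (ContinuousLinearMap.mul ℝ ℂ)
        ((conjL.comp (φ x • coordC n j + (fderiv ℝ (⇑φ) x).smulRight ((x j : ℂ)))) v) (φ x))
        = fun x : E ↦ (starRingEnd ℂ) (φ x) * φ x + (starRingEnd ℂ) (XD x) * φ x := by
      funext x
      rw [show ((ContinuousLinearMap.mul ℝ ℂ) ((conjL.comp (φ x • coordC n j +
        (fderiv ℝ (⇑φ) x).smulRight ((x j : ℂ)))) v) (φ x)) = ((conjL.comp (φ x • coordC n j +
        (fderiv ℝ (⇑φ) x).smulRight ((x j : ℂ)))) v) * (φ x) from rfl, hfv x, map_add]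
      ring
    rw [heq, integral_add (int_conj_mul φ φ) (int_conj_mul XD φ)]
    congr 1
    have : (fun x : E ↦ (starRingEnd ℂ) (φ x) * φ x)
        = fun x : E ↦ ((‖φ x‖ ^ 2 : ℝ) : ℂ) := by
      funext x
      rw [mul_comm, Complex.mul_conj, Complex.normSq_eq_norm_sq]
    rw [this]
    exact integral_ofReal
  rw [hL, hR] at hIBP
  set c : ℂ := ∫ x : E, (starRingEnd ℂ) (Xφ x) * Dφ x with hc
  have hconj : (∫ x : E, (starRingEnd ℂ) (XD x) * φ x) = (starRingEnd ℂ) c := by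
    have hpt : (fun x : E ↦ (starRingEnd ℂ) (XD x) * φ x)
        = fun x : E ↦ (starRingEnd ℂ) ((starRingEnd ℂ) (Xφ x) * Dφ x) := by
      funext x
      have e1 : XD x = Dφ x * (x j : ℂ) := rfl
      have e2 : Xφ x = φ x * (x j : ℂ) := rfl
      simp only [e1, e2, map_mul, Complex.conj_conj, Complex.conj_ofReal]
      ring
    rw [hpt, integral_conj]
  rw [hconj] at hIBP
  have hsum : c + (starRingEnd ℂ) c = -((∫ x : E, ‖φ x‖ ^ 2 : ℝ) : ℂ) := by
    linear_combination hIBP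
  rw [Complex.add_conj] at hsum
  have goalc : ((2 * c.re : ℝ) : ℂ) = ((-(∫ x : E, ‖φ x‖ ^ 2 : ℝ) : ℝ) : ℂ) := by
    rw [hsum]
    push_cast
    ring
  exact Complex.ofReal_injective goalc

lemma norm_add_sq_c (z w : ℂ) :
    ‖z + w‖ ^ 2 = ‖z‖ ^ 2 + ‖w‖ ^ 2 + 2 * ((starRingEnd ℂ) z * w).re := by
  simp only [Complex.sq_norm, Complex.normSq_add]
  congr 1
  congr 1
  calc (z * (starRingEnd ℂ) w).re = ((starRingEnd ℂ) (z * (starRingEnd ℂ) w)).re :=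
        (Complex.conj_re _).symm
    _ = ((starRingEnd ℂ) z * w).re := by rw [map_mul, Complex.conj_conj]

lemma key (φ : SchwartzMap (EuclideanSpace ℝ (Fin n)) ℂ) (j : Fin n) :
    (∫ x : E, ‖(mulCoord j φ + pderivCLM ℝ (EuclideanSpace.single j 1) φ) x‖ ^ 2)
      = (∫ x : E, ‖mulCoord j φ x‖ ^ 2)
        + (∫ x : E, ‖(pderivCLM ℝ (EuclideanSpace.single j 1) φ) x‖ ^ 2)
        - ∫ x : E, ‖φ x‖ ^ 2 := by
  set Xφ := mulCoord j φ with hXφ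
  set Dφ := pderivCLM ℝ (EuclideanSpace.single j 1) φ with hDφ
  have hpt : (fun x : E ↦ ‖(Xφ + Dφ) x‖ ^ 2)
      = fun x : E ↦ ‖Xφ x‖ ^ 2 + ‖Dφ x‖ ^ 2
          + 2 * ((starRingEnd ℂ) (Xφ x) * Dφ x).re := by
    funext x
    rw [SchwartzMap.add_apply, norm_add_sq_c]
  have hfg : Integrable (fun x : E ↦ ‖Xφ x‖ ^ 2 + ‖Dφ x‖ ^ 2) :=
    (int_normsq Xφ).add (int_normsq Dφ)
  have hcm : Integrable (fun x : E ↦ 2 * ((starRingEnd ℂ) (Xφ x) * Dφ x).re) :=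
    (int_conj_mul Xφ Dφ).re.const_mul 2
  rw [hpt, integral_add hfg hcm,
    integral_add (int_normsq Xφ) (int_normsq Dφ), MeasureTheory.integral_const_mul]
  have hre : (∫ a : E, ((starRingEnd ℂ) (Xφ a) * Dφ a).re)
      = (∫ a : E, (starRingEnd ℂ) (Xφ a) * Dφ a).re :=
    integral_re (int_conj_mul Xφ Dφ)
  rw [hre]
  have hcr := cross φ j
  rw [← hXφ, ← hDφ] at hcr
  linarith [hcr]

lemma key_sum (φ : SchwartzMap (EuclideanSpace ℝ (Fin n)) ℂ) :
    (∑ j, ∫ x : E, ‖(mulCoord j φ + pderivCLM ℝ (EuclideanSpace.single j 1) φ) x‖ ^ 2)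
      = ((∑ j, ∫ x : E, ‖(x j : ℂ) * φ x‖ ^ 2)
        + ∑ j, ∫ x : E, ‖fderiv ℝ (⇑φ) x (EuclideanSpace.single j 1)‖ ^ 2)
        - (n : ℝ) * ∫ x : E, ‖φ x‖ ^ 2 := by
  have h1 : ∀ j : Fin n, (∫ x : E, ‖(x j : ℂ) * φ x‖ ^ 2)
      = ∫ x : E, ‖mulCoord j φ x‖ ^ 2 := by
    intro j
    congr 1
    funext x
    rw [mulCoord_apply, mul_comm]
  have h2 : ∀ j : Fin n, (∫ x : E, ‖fderiv ℝ (⇑φ) x (EuclideanSpace.single j 1)‖ ^ 2)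
      = ∫ x : E, ‖(pderivCLM ℝ (EuclideanSpace.single j 1) φ) x‖ ^ 2 := by
    intro j
    congr 1
  calc (∑ j, ∫ x : E, ‖(mulCoord j φ + pderivCLM ℝ (EuclideanSpace.single j 1) φ) x‖ ^ 2)
      = ∑ j : Fin n, ((∫ x : E, ‖mulCoord j φ x‖ ^ 2)
        + (∫ x : E, ‖(pderivCLM ℝ (EuclideanSpace.single j 1) φ) x‖ ^ 2)
        - ∫ x : E, ‖φ x‖ ^ 2) := Finset.sum_congr rfl (fun j _ ↦ key φ j)
    _ = _ := by
        rw [Finset.sum_sub_distrib, Finset.sum_add_distrib, Finset.sum_const,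
          Finset.card_univ, Fintype.card_fin, nsmul_eq_mul]
        rw [show (∑ j, ∫ x : E, ‖(x j : ℂ) * φ x‖ ^ 2)
            = ∑ j : Fin n, ∫ x : E, ‖mulCoord j φ x‖ ^ 2 from
          Finset.sum_congr rfl (fun j _ ↦ h1 j)]
        rw [show (∑ j, ∫ x : E, ‖fderiv ℝ (⇑φ) x (EuclideanSpace.single j 1)‖ ^ 2)
            = ∑ j : Fin n, ∫ x : E, ‖(pderivCLM ℝ (EuclideanSpace.single j 1) φ) x‖ ^ 2 from
          Finset.sum_congr rfl (fun j _ ↦ h2 j)]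

end


/-- Characterization of the Gaussian (coherent state): for a Schwartz function `φ`,
`n‖φ‖² = ‖xφ‖² + ‖∇φ‖²` iff `xφ = −∇φ` iff `φ` is the normalized Gaussian up to a phase. -/
theorem stmt_14 (n : ℕ) (hn : 1 ≤ n)
    (φ : SchwartzMap (EuclideanSpace ℝ (Fin n)) ℂ)
    (nφ : ℝ) (hnφ : nφ = Real.sqrt (∫ x, ‖φ x‖ ^ 2)) :
    List.TFAE
      [(n : ℝ) * ∫ x, ‖φ x‖ ^ 2
          = (∑ j, ∫ x, ‖(x j : ℂ) * φ x‖ ^ 2) +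
            ∑ j, ∫ x, ‖fderiv ℝ (⇑φ) x (EuclideanSpace.single j 1)‖ ^ 2,
        ∀ (x : EuclideanSpace ℝ (Fin n)) (j : Fin n),
          (x j : ℂ) * φ x = -(fderiv ℝ (⇑φ) x (EuclideanSpace.single j 1)),
        ∃ θ : ℝ, ∀ x : EuclideanSpace ℝ (Fin n),
          φ x = Complex.exp (θ * Complex.I) *
            ((Real.pi ^ (-(n : ℝ) / 4) : ℝ) : ℂ) * (nφ : ℂ) *
            Complex.exp (-((‖x‖ : ℂ) ^ 2) / 2)] := by
  tfae_have 2 → 3 := fun h2 ↦ two_three φ nφ hnφ h2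
  tfae_have 3 → 2 := by
    rintro ⟨θ, hθ⟩
    exact three_two φ _ hθ
  tfae_have 1 → 2 := by
    intro h1
    have hks := key_sum φ
    have hsum0 : (∑ j, ∫ x : EuclideanSpace ℝ (Fin n),
        ‖(mulCoord j φ + SchwartzMap.pderivCLM ℝ (EuclideanSpace.single j 1) φ) x‖ ^ 2) = 0 := by
      rw [hks]
      linarith [h1]
    have hnn : ∀ j ∈ Finset.univ, (0:ℝ) ≤ ∫ x : EuclideanSpace ℝ (Fin n),
        ‖(mulCoord j φ + SchwartzMap.pderivCLM ℝ (EuclideanSpace.single j 1) φ) x‖ ^ 2 :=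
      fun j _ ↦ MeasureTheory.integral_nonneg (fun x ↦ sq_nonneg _)
    have hzero := (Finset.sum_eq_zero_iff_of_nonneg hnn).mp hsum0
    intro x j
    set ψ := mulCoord j φ + SchwartzMap.pderivCLM ℝ (EuclideanSpace.single j 1) φ with hψ
    have hIj : (∫ x : EuclideanSpace ℝ (Fin n), ‖ψ x‖ ^ 2) = 0 := hzero j (Finset.mem_univ j)
    have hae := (MeasureTheory.integral_eq_zero_iff_of_nonneg
      (fun x ↦ sq_nonneg ‖ψ x‖) (int_normsq ψ)).mp hIj
    have hfeq : (fun x : EuclideanSpace ℝ (Fin n) ↦ ‖ψ x‖ ^ 2) = fun _ ↦ (0:ℝ) :=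
      ((ψ.continuous.norm.pow 2).ae_eq_iff_eq MeasureTheory.volume continuous_const).mp hae
    have hx : ‖ψ x‖ ^ 2 = 0 := congrFun hfeq x
    have hψx : ψ x = 0 := by
      rwa [pow_eq_zero_iff (two_ne_zero), norm_eq_zero] at hx
    have hform : φ x * (x j : ℂ) + fderiv ℝ (⇑φ) x (EuclideanSpace.single j 1) = 0 := by
      rw [← mulCoord_apply j φ x, ← SchwartzMap.pderivCLM_apply ℝ (EuclideanSpace.single j 1) φ x,
        ← SchwartzMap.add_apply]
      exact hψx
    linear_combination hform
  tfae_have 2 → 1 := by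
    intro h2
    have hz : ∀ j : Fin n, (∫ x : EuclideanSpace ℝ (Fin n),
        ‖(mulCoord j φ + SchwartzMap.pderivCLM ℝ (EuclideanSpace.single j 1) φ) x‖ ^ 2) = 0 := by
      intro j
      have : (fun x : EuclideanSpace ℝ (Fin n) ↦
          ‖(mulCoord j φ + SchwartzMap.pderivCLM ℝ (EuclideanSpace.single j 1) φ) x‖ ^ 2)
          = fun _ ↦ (0:ℝ) := by
        funext x
        have h0 : (mulCoord j φ + SchwartzMap.pderivCLM ℝ (EuclideanSpace.single j 1) φ) x = 0 := by
          rw [SchwartzMap.add_apply, mulCoord_apply, SchwartzMap.pderivCLM_apply]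
          linear_combination (h2 x j)
        rw [h0]
        simp
      rw [this]
      simp
    have hs : (∑ j, ∫ x : EuclideanSpace ℝ (Fin n),
        ‖(mulCoord j φ + SchwartzMap.pderivCLM ℝ (EuclideanSpace.single j 1) φ) x‖ ^ 2) = 0 :=
      Finset.sum_eq_zero (fun j _ ↦ hz j)
    have hks := key_sum φ
    linarith [hks, hs]
  tfae_finish
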